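/- Let $t_1 \neq t_2$ be natural numbers and $D = D_{t_1} \times D_{t_2}$. Then every automorphism of $D$ normalizing the image of $F_{1,l'} \times F_{2,l'}$ in $\mathrm{Aut}(D)$ leaves each factor $D_{t_1}$ and $D_{t_2}$ invariant; the factors $D_{t_i}$ can be characterized as the nontrivial centralizers in $D$ of nontrivial $p$-elements of $F_{1,l'} \times F_{2,l'}$. -/

import Mathlib

-- L1: translation-fixed summing-to-zero functions vanish
lemma fix_trans {p n : ℕ} [NeZero p] (hpn : IsUnit (p : ZMod n)) (hp : p.Prime)
    (c : ZMod p) (hc : c ≠ 0) (f : ZMod p → ZMod n)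
    (hsum : ∑ x, f x = 0) (hfix : ∀ x, f (x - c) = f x) : f = 0 := by
  haveI : Fact p.Prime := ⟨hp⟩
  have key : ∀ (k : ℕ) (x : ZMod p), f (x - k • c) = f x := by
    intro k
    induction k with
    | zero => simp
    | succ k ih =>
      intro x
      have : x - (k+1) • c = (x - c) - k • c := by push_cast; ring
      rw [this, ih, hfix]
  have hconst : ∀ x : ZMod p, f x = f 0 := by
    intro x
    have h := key (x * c⁻¹).val x
    rw [show ((x * c⁻¹).val • c : ZMod p) = x by
        rw [nsmul_eq_mul, ZMod.natCast_val, ZMod.cast_id, mul_assoc,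
          inv_mul_cancel₀ hc, mul_one]] at h
    simpa using h.symm
  have hsum' : (p : ZMod n) * f 0 = 0 := by
    calc (p : ZMod n) * f 0 = ∑ _x : ZMod p, f 0 := by
          simp [Finset.sum_const, ZMod.card, nsmul_eq_mul]
      _ = ∑ x, f x := Finset.sum_congr rfl (fun x _ => (hconst x).symm)
      _ = 0 := hsum
  have h0 : f 0 = 0 := by
    obtain ⟨v, hv⟩ := hpn
    calc f 0 = (v⁻¹ : (ZMod n)ˣ) * ((p : ZMod n) * f 0) := by
          rw [← mul_assoc, ← hv, Units.inv_mul, one_mul]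
      _ = 0 := by rw [hsum', mul_zero]
  funext x
  rw [hconst x, h0]; rfl

-- L2: sums are invariant under the affine reindexing
lemma sum_aff {p : ℕ} [NeZero p] (hp : p.Prime) {M : Type*} [AddCommMonoid M]
    (c : ZMod p) (u : (ZMod p)ˣ) (f : ZMod p → M) :
    ∑ x, f (((u⁻¹ : (ZMod p)ˣ) : ZMod p) * (x - c)) = ∑ x, f x := by
  haveI : Fact p.Prime := ⟨hp⟩
  exact Equiv.sum_comp
    ((Equiv.subRight c).trans (Equiv.mulLeft₀ ((u⁻¹ : (ZMod p)ˣ) : ZMod p)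
      (Units.ne_zero _))) f

-- generic single-component action
def oneAct (p n : ℕ) (c : ZMod p) (u : (ZMod p)ˣ) (f : ZMod p → ZMod n) :
    ZMod p → ZMod n :=
  fun x => f (((u⁻¹ : (ZMod p)ˣ) : ZMod p) * (x - c))

lemma oneAct_iter {p : ℕ} (hp : p.Prime) (n : ℕ) (c : ZMod p) (u : (ZMod p)ˣ)
    (k : ℕ) (f : ZMod p → ZMod n) :
    (oneAct p n c u)^[k] f
      = oneAct p n (c * ∑ i ∈ Finset.range k, (u : ZMod p) ^ i) (u ^ k) f := by
  haveI : Fact p.Prime := ⟨hp⟩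
  induction k with
  | zero =>
    funext x
    simp [oneAct]
  | succ k ih =>
    rw [Function.iterate_succ_apply', ih]
    funext x
    show f _ = f _
    congr 1
    have hu : ((u : ZMod p)) ≠ 0 := Units.ne_zero u
    have h1 : ∀ m : ℕ, (((u ^ m)⁻¹ : (ZMod p)ˣ) : ZMod p) = ((u : ZMod p) ^ m)⁻¹ := by
      intro m; rw [← inv_pow]; push_cast; rw [← inv_pow]
    rw [h1, h1, show (((u⁻¹ : (ZMod p)ˣ)) : ZMod p) = (u : ZMod p)⁻¹ by push_cast; ring,
      geom_sum_succ]
    field_simp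
    ring

-- L3: if u ≠ 1 then oneAct (b, u) moves some sum-zero function
lemma exists_moved {p : ℕ} [NeZero p] (hp : p.Prime) (n : ℕ)
    (hn : (1 : ZMod n) ≠ 0) (b : ZMod p) (u : (ZMod p)ˣ) (hu : u ≠ 1) :
    ∃ f : ZMod p → ZMod n, (∑ x, f x = 0) ∧ oneAct p n b u f ≠ f := by
  haveI : Fact p.Prime := ⟨hp⟩
  set w : ZMod p := (u : ZMod p) with hw
  have hw1 : w ≠ 1 := fun h => hu (Units.ext (by simpa [hw] using h))
  have hw0 : w ≠ 0 := Units.ne_zero u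
  have h1w : (1 : ZMod p) - w ≠ 0 := sub_ne_zero.mpr (Ne.symm hw1)
  set x₀ : ZMod p := (1 - w)⁻¹ * b with hx₀
  have hfix : b + w * x₀ = x₀ := by
    have : (1 - w) * x₀ = b := by rw [hx₀, ← mul_assoc, mul_inv_cancel₀ h1w, one_mul]
    linear_combination -this
  refine ⟨Pi.single (x₀ + 1) 1 - Pi.single x₀ 1, ?_, ?_⟩
  · simp [Finset.sum_sub_distrib, Finset.sum_pi_single]
  · intro hfx
    have := congrFun hfx (b + w * (x₀ + 1))
    have harg : ((u⁻¹ : (ZMod p)ˣ) : ZMod p) * ((b + w * (x₀ + 1)) - b) = x₀ + 1 := by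
      have : ((u⁻¹ : (ZMod p)ˣ) : ZMod p) = w⁻¹ := by push_cast; ring
      rw [this]; field_simp; ring
    rw [oneAct] at this
    simp only [harg] at this
    have hL : ((Pi.single (x₀ + 1) 1 - Pi.single x₀ 1 : ZMod p → ZMod n)) (x₀ + 1) = 1 := by
      have hne : x₀ + 1 ≠ x₀ := by
        intro h; exact one_ne_zero (by linear_combination h)
      simp [Pi.single_apply, hne]
    have hR : ((Pi.single (x₀ + 1) 1 - Pi.single x₀ 1 : ZMod p → ZMod n)) (b + w * (x₀ + 1)) = 0 := by
      have he : b + w * (x₀ + 1) = x₀ + w := by linear_combination hfix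
      have h1 : x₀ + w ≠ x₀ + 1 := fun h => hw1 (by linear_combination h)
      have h2 : x₀ + w ≠ x₀ := fun h => hw0 (by linear_combination h)
      rw [he]; simp [Pi.single_apply, h1, h2]
    rw [hL, hR] at this
    exact hn this

/-- The action of an element `((c₁,u₁),(c₂,u₂)) ∈ F₁ × F₂` (affine maps of the
line over `𝔽_p`) on the ambient group
`Ω_{t₁} × Ω_{t₂} = (ZMod p → ZMod (l^t₁)) × (ZMod p → ZMod (l^t₂))`,
permuting indices via the affine action `(c,u)·x = c + u·x`. -/
def affAct (l p t₁ t₂ : ℕ) (c₁ c₂ : ZMod p) (u₁ u₂ : (ZMod p)ˣ)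
    (g : (ZMod p → ZMod (l ^ t₁)) × (ZMod p → ZMod (l ^ t₂))) :
    (ZMod p → ZMod (l ^ t₁)) × (ZMod p → ZMod (l ^ t₂)) :=
  (fun x => g.1 (((u₁⁻¹ : (ZMod p)ˣ) : ZMod p) * (x - c₁)),
   fun x => g.2 (((u₂⁻¹ : (ZMod p)ˣ) : ZMod p) * (x - c₂)))


lemma affAct_iter (l p t₁ t₂ : ℕ) [NeZero p] (c₁ c₂ : ZMod p) (u₁ u₂ : (ZMod p)ˣ)
    (k : ℕ) (g : (ZMod p → ZMod (l ^ t₁)) × (ZMod p → ZMod (l ^ t₂))) :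
    (affAct l p t₁ t₂ c₁ c₂ u₁ u₂)^[k] g
      = ((oneAct p (l ^ t₁) c₁ u₁)^[k] g.1, (oneAct p (l ^ t₂) c₂ u₂)^[k] g.2) := by
  induction k with
  | zero => rfl
  | succ k ih =>
    rw [Function.iterate_succ_apply', Function.iterate_succ_apply',
      Function.iterate_succ_apply', ih]
    rfl

/-- Let `l ≠ p` be primes with `p - 1` not a power of `l`, and `t₁ ≠ t₂` positive
integers.  Let `D = D_{t₁} × D_{t₂}` (pairs of tuples each summing to zero)
with `F_{1,l'} × F_{2,l'}` acting by affine permutations of indices (the units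
`u₁, u₂` ranging over `O_{l'}(𝔽_p^×)`, i.e. of order coprime to `l`).  Then:
(1) every automorphism `ζ` of `D` normalising the image of
`F_{1,l'} × F_{2,l'}` in `Aut(D)` leaves each factor `D_{t₁}` and `D_{t₂}`
invariant; and
(2) the factors are characterised as the nontrivial fixed-point sets
(centralisers) in `D` of nontrivial `p`-elements `(c₁, c₂)` of
`F_{1,l'} × F_{2,l'}`. -/
theorem stmt_17
    (l p t₁ t₂ : ℕ) (hl : l.Prime) (hp : p.Prime) [NeZero p] (hlp : l ≠ p)
    (ht₁ : 0 < t₁) (ht₂ : 0 < t₂) (ht : t₁ ≠ t₂)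
    (hpow : ¬ ∃ k : ℕ, p - 1 = l ^ k)
    (D : AddSubgroup ((ZMod p → ZMod (l ^ t₁)) × (ZMod p → ZMod (l ^ t₂))))
    (hD : ∀ g : (ZMod p → ZMod (l ^ t₁)) × (ZMod p → ZMod (l ^ t₂)),
        g ∈ D ↔ ((∑ x, g.1 x) = 0 ∧ (∑ x, g.2 x) = 0))
    (ζ : D ≃+ D)
    (hnorm : ∀ (c₁ c₂ : ZMod p) (u₁ u₂ : (ZMod p)ˣ),
      Nat.Coprime (orderOf u₁) l → Nat.Coprime (orderOf u₂) l →
      ∃ (c₁' c₂' : ZMod p) (u₁' u₂' : (ZMod p)ˣ),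
        Nat.Coprime (orderOf u₁') l ∧ Nat.Coprime (orderOf u₂') l ∧
        ∀ g h : D, affAct l p t₁ t₂ c₁ c₂ u₁ u₂ g.val = h.val →
          affAct l p t₁ t₂ c₁' c₂' u₁' u₂' (ζ g).val = (ζ h).val) :
    ((∀ g : D, g.val.2 = 0 → (ζ g).val.2 = 0) ∧
     (∀ g : D, g.val.1 = 0 → (ζ g).val.1 = 0)) ∧
    (∀ c₁ c₂ : ZMod p,
      (c₁ ≠ 0 → c₂ ≠ 0 →
        {g : D | affAct l p t₁ t₂ c₁ c₂ 1 1 g.val = g.val} = {0}) ∧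
      (c₁ ≠ 0 → c₂ = 0 →
        {g : D | affAct l p t₁ t₂ c₁ c₂ 1 1 g.val = g.val}
          = {g : D | g.val.1 = 0}) ∧
      (c₁ = 0 → c₂ ≠ 0 →
        {g : D | affAct l p t₁ t₂ c₁ c₂ 1 1 g.val = g.val}
          = {g : D | g.val.2 = 0})) := by
  haveI : Fact p.Prime := ⟨hp⟩
  have hl1 : 1 < l := hl.one_lt
  have hn₁ : 1 < l ^ t₁ := Nat.one_lt_pow ht₁.ne' hl1
  have hn₂ : 1 < l ^ t₂ := Nat.one_lt_pow ht₂.ne' hl1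
  haveI : NeZero (l ^ t₁) := ⟨by omega⟩
  haveI : NeZero (l ^ t₂) := ⟨by omega⟩
  haveI : Fact (1 < l ^ t₁) := ⟨hn₁⟩
  haveI : Fact (1 < l ^ t₂) := ⟨hn₂⟩
  have hone₁ : (1 : ZMod (l ^ t₁)) ≠ 0 := one_ne_zero
  have hone₂ : (1 : ZMod (l ^ t₂)) ≠ 0 := one_ne_zero
  have hcop : Nat.Coprime p l := (Nat.coprime_primes hp hl).mpr (Ne.symm hlp)
  have hpu₁ : IsUnit ((p : ZMod (l ^ t₁))) :=
    (ZMod.isUnit_iff_coprime p (l ^ t₁)).mpr (hcop.pow_right t₁)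
  have hpu₂ : IsUnit ((p : ZMod (l ^ t₂))) :=
    (ZMod.isUnit_iff_coprime p (l ^ t₂)).mpr (hcop.pow_right t₂)
  have hact1 : ∀ (c₁ c₂ : ZMod p)
      (g : (ZMod p → ZMod (l ^ t₁)) × (ZMod p → ZMod (l ^ t₂))),
      affAct l p t₁ t₂ c₁ c₂ 1 1 g
        = (fun x => g.1 (x - c₁), fun x => g.2 (x - c₂)) := by
    intro c₁ c₂ g
    simp [affAct]
  have hmem : ∀ (c₁ c₂ : ZMod p) (u₁ u₂ : (ZMod p)ˣ)
      (g : (ZMod p → ZMod (l ^ t₁)) × (ZMod p → ZMod (l ^ t₂))), g ∈ D →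
      affAct l p t₁ t₂ c₁ c₂ u₁ u₂ g ∈ D := by
    intro c₁ c₂ u₁ u₂ g hg
    rw [hD] at hg ⊢
    exact ⟨(sum_aff hp c₁ u₁ g.1).trans hg.1, (sum_aff hp c₂ u₂ g.2).trans hg.2⟩
  -- test elements
  set f₁ : ZMod p → ZMod (l ^ t₁) := Pi.single 0 1 - Pi.single 1 1 with hf₁
  set f₂ : ZMod p → ZMod (l ^ t₂) := Pi.single 0 1 - Pi.single 1 1 with hf₂
  have hf₁sum : ∑ x, f₁ x = 0 := by
    simp [hf₁, Finset.sum_sub_distrib, Finset.sum_pi_single]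
  have hf₂sum : ∑ x, f₂ x = 0 := by
    simp [hf₂, Finset.sum_sub_distrib, Finset.sum_pi_single]
  have hf₁0 : f₁ 0 = 1 := by
    simp [hf₁, Pi.single_apply]
  have hf₂0 : f₂ 0 = 1 := by
    simp [hf₂, Pi.single_apply]
  have hf₁ne : f₁ ≠ 0 := fun h => hone₁ (by rw [← hf₁0, h]; rfl)
  have hf₂ne : f₂ ≠ 0 := fun h => hone₂ (by rw [← hf₂0, h]; rfl)
  -- main engine: the image of a translation under ζ-conjugation is a translation
  have main : ∀ a₁ a₂ : ZMod p, ∃ b₁ b₂ : ZMod p,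
      ∀ g h : D, affAct l p t₁ t₂ a₁ a₂ 1 1 g.val = h.val →
        affAct l p t₁ t₂ b₁ b₂ 1 1 (ζ g).val = (ζ h).val := by
    intro a₁ a₂
    obtain ⟨b₁, b₂, u₁', u₂', -, -, hrel⟩ :=
      hnorm a₁ a₂ 1 1 (by simp [Nat.coprime_one_left]) (by simp [Nat.coprime_one_left])
    set σD : D → D := fun g =>
      ⟨affAct l p t₁ t₂ a₁ a₂ 1 1 g.val, hmem _ _ _ _ _ g.2⟩ with hσD
    have hrel' : ∀ g : D,
        affAct l p t₁ t₂ b₁ b₂ u₁' u₂' (ζ g).val = (ζ (σD g)).val :=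
      fun g => hrel g (σD g) rfl
    have hiter : ∀ (k : ℕ) (g : D),
        (affAct l p t₁ t₂ b₁ b₂ u₁' u₂')^[k] ((ζ g).val) = (ζ (σD^[k] g)).val := by
      intro k
      induction k with
      | zero => intro g; rfl
      | succ k ih =>
        intro g
        rw [Function.iterate_succ_apply', ih, Function.iterate_succ_apply']
        exact hrel' _
    have hσiter : ∀ (k : ℕ) (g : D),
        (σD^[k] g).val = (affAct l p t₁ t₂ a₁ a₂ 1 1)^[k] g.val := by
      intro k
      induction k with
      | zero => intro g; rfl
      | succ k ih =>
        intro g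
        rw [Function.iterate_succ_apply', Function.iterate_succ_apply', ← ih]
    -- p-th iterate of a pure translation is the identity
    have hone_id : ∀ (n : ℕ) (a : ZMod p) (f : ZMod p → ZMod n),
        (oneAct p n a 1)^[p] f = f := by
      intro n a f
      have e := oneAct_iter hp n a 1 p f
      have hgeo : a * ∑ i ∈ Finset.range p, ((1 : (ZMod p)ˣ) : ZMod p) ^ i = 0 := by
        simp [Finset.sum_const, Finset.card_range, nsmul_eq_mul, ZMod.natCast_self]
      rw [hgeo, one_pow] at e
      rw [e]
      funext x
      simp [oneAct]
    have htransp : ∀ g : (ZMod p → ZMod (l ^ t₁)) × (ZMod p → ZMod (l ^ t₂)),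
        (affAct l p t₁ t₂ a₁ a₂ 1 1)^[p] g = g := by
      intro g
      rw [affAct_iter, hone_id, hone_id]
    -- hence the p-th iterate of the conjugate fixes everything in D
    have hfixp : ∀ y : D,
        (affAct l p t₁ t₂ b₁ b₂ u₁' u₂')^[p] (y.val) = y.val := by
      intro y
      have h1 := hiter p (ζ.symm y)
      rw [ζ.apply_symm_apply] at h1
      have h2 : σD^[p] (ζ.symm y) = ζ.symm y :=
        Subtype.ext (by rw [hσiter, htransp])
      rw [h2, ζ.apply_symm_apply] at h1
      exact h1
    -- units to the p-th power are themselves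
    have hupow : ∀ u : (ZMod p)ˣ, u ^ p = u := by
      intro u
      have h := ZMod.units_pow_card_sub_one_eq_one p u
      calc u ^ p = u ^ (p - 1 + 1) := by rw [Nat.sub_add_cancel hp.one_le]
        _ = u ^ (p - 1) * u := pow_succ u (p - 1)
        _ = u := by rw [h, one_mul]
    -- deduce u₁' = 1
    have hu₁' : u₁' = 1 := by
      by_contra hu
      obtain ⟨f, hfs, hfm⟩ := exists_moved hp (l ^ t₁) hone₁
        (b₁ * ∑ i ∈ Finset.range p, ((u₁' : ZMod p)) ^ i) u₁' hu
      have hfD : ((f, 0) : (ZMod p → ZMod (l ^ t₁)) × (ZMod p → ZMod (l ^ t₂))) ∈ D := by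
        rw [hD]; exact ⟨hfs, by simp⟩
      have h0 := hfixp ⟨(f, 0), hfD⟩
      rw [affAct_iter] at h0
      have h1 : (oneAct p (l ^ t₁) b₁ u₁')^[p] f = f := congrArg Prod.fst h0
      rw [oneAct_iter hp, hupow] at h1
      exact hfm h1
    have hu₂' : u₂' = 1 := by
      by_contra hu
      obtain ⟨f, hfs, hfm⟩ := exists_moved hp (l ^ t₂) hone₂
        (b₂ * ∑ i ∈ Finset.range p, ((u₂' : ZMod p)) ^ i) u₂' hu
      have hfD : ((0, f) : (ZMod p → ZMod (l ^ t₁)) × (ZMod p → ZMod (l ^ t₂))) ∈ D := by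
        rw [hD]; exact ⟨by simp, hfs⟩
      have h0 := hfixp ⟨(0, f), hfD⟩
      rw [affAct_iter] at h0
      have h1 : (oneAct p (l ^ t₂) b₂ u₂')^[p] f = f := congrArg Prod.snd h0
      rw [oneAct_iter hp, hupow] at h1
      exact hfm h1
    refine ⟨b₁, b₂, ?_⟩
    rw [hu₁', hu₂'] at hrel
    exact hrel
  -- helper facts
  have hle : ∀ s r : ℕ, ((l ^ s : ℕ) : ZMod (l ^ r)) = 0 → r ≤ s := by
    intro s r h
    have hdvd := (ZMod.natCast_eq_zero_iff _ _).mp h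
    exact (pow_dvd_pow_iff (by omega : (l : ℕ) ≠ 0)
      (fun hu => by rw [Nat.isUnit_iff] at hu; omega)).mp hdvd
  have hkill₁ : ∀ f : ZMod p → ZMod (l ^ t₁), (l ^ t₁) • f = 0 := by
    intro f; funext x
    show (l ^ t₁) • f x = 0
    rw [nsmul_eq_mul, ZMod.natCast_self, zero_mul]
  have hkill₂ : ∀ f : ZMod p → ZMod (l ^ t₂), (l ^ t₂) • f = 0 := by
    intro f; funext x
    show (l ^ t₂) • f x = 0
    rw [nsmul_eq_mul, ZMod.natCast_self, zero_mul]
  -- extraction of componentwise fixedness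
  have hfix1of : ∀ (c : ZMod p), c ≠ 0 → ∀ g : D,
      (∀ x, g.val.1 (x - c) = g.val.1 x) → g.val.1 = 0 :=
    fun c hc g hfx => fix_trans hpu₁ hp c hc _ ((hD g.val).mp g.2).1 hfx
  have hfix2of : ∀ (c : ZMod p), c ≠ 0 → ∀ g : D,
      (∀ x, g.val.2 (x - c) = g.val.2 x) → g.val.2 = 0 :=
    fun c hc g hfx => fix_trans hpu₂ hp c hc _ ((hD g.val).mp g.2).2 hfx
  have hone_ne : (1 : ZMod p) ≠ 0 := one_ne_zero
  -- CLAIM 1 : ζ preserves {g | g.2 = 0}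
  have claim1 : ∀ g : D, g.val.2 = 0 → (ζ g).val.2 = 0 := by
    obtain ⟨b₁, b₂, hrel⟩ := main 0 1
    have hσfix : ∀ g : D, g.val.2 = 0 → affAct l p t₁ t₂ 0 1 1 1 g.val = g.val := by
      intro g hg2
      rw [hact1]
      refine Prod.ext (by funext x; simp) ?_
      rw [hg2]
      funext x; rfl
    have hb₂ : b₂ ≠ 0 := by
      intro hb₂0
      subst hb₂0
      have h₀D : ((0, f₂) : (ZMod p → ZMod (l ^ t₁)) × (ZMod p → ZMod (l ^ t₂))) ∈ D := by
        rw [hD]; exact ⟨by simp, hf₂sum⟩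
      set h₀ : D := ⟨(0, f₂), h₀D⟩ with hh₀
      by_cases hb₁ : b₁ = 0
      · subst hb₁
        -- the conjugate is the identity, so σ fixes everything: contradiction with h₀
        have hall : ∀ g : D, g.val.2 = 0 := by
          intro g
          set gσ : D := ⟨affAct l p t₁ t₂ 0 1 1 1 g.val, hmem _ _ _ _ _ g.2⟩ with hgσ
          have h1 := hrel g gσ rfl
          have h2 : affAct l p t₁ t₂ 0 0 1 1 (ζ g).val = (ζ g).val := by
            rw [hact1]
            exact Prod.ext (by funext x; simp)
              (by funext x; simp)
          rw [h2] at h1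
          have h3 : gσ = g := ζ.injective (Subtype.ext h1).symm
          have h4 : affAct l p t₁ t₂ 0 1 1 1 g.val = g.val := congrArg Subtype.val h3
          rw [hact1] at h4
          exact hfix2of 1 hone_ne g (congrFun (congrArg Prod.snd h4))
        exact hf₂ne (hall h₀)
      · -- b₁ ≠ 0, b₂ = 0 : derive t₂ ≤ t₁ and t₁ ≤ t₂
        -- (i) t₂ ≤ t₁
        have ht21 : t₂ ≤ t₁ := by
          set g : D := ζ.symm h₀ with hg
          set gσ : D := ⟨affAct l p t₁ t₂ 0 1 1 1 g.val, hmem _ _ _ _ _ g.2⟩ with hgσ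
          have h1 := hrel g gσ rfl
          rw [show ζ g = h₀ by rw [hg, ζ.apply_symm_apply]] at h1
          have h2 : affAct l p t₁ t₂ b₁ 0 1 1 h₀.val = h₀.val := by
            rw [hact1]
            exact Prod.ext (by funext x; rfl) (by funext x; simp)
          rw [h2] at h1
          have h3 : gσ = g := by
            apply ζ.injective
            rw [show ζ g = h₀ by rw [hg, ζ.apply_symm_apply]]
            exact Subtype.ext h1.symm
          have h4 : affAct l p t₁ t₂ 0 1 1 1 g.val = g.val := congrArg Subtype.val h3
          rw [hact1] at h4
          have hg2 : g.val.2 = 0 := hfix2of 1 hone_ne g (congrFun (congrArg Prod.snd h4))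
          have hgkill : (l ^ t₁) • g = 0 := by
            apply Subtype.ext
            show (l ^ t₁) • g.val = (0 : (ZMod p → ZMod (l ^ t₁)) × (ZMod p → ZMod (l ^ t₂)))
            refine Prod.ext ?_ ?_
            · exact hkill₁ g.val.1
            · show (l ^ t₁) • g.val.2 = 0
              rw [hg2, smul_zero]
          have hζkill : (l ^ t₁) • h₀ = 0 := by
            have e : ζ ((l ^ t₁) • g) = (l ^ t₁) • ζ g := map_nsmul ζ _ g
            rw [hgkill, map_zero] at e
            rw [show h₀ = ζ g by rw [hg, ζ.apply_symm_apply], ← e]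
          have hval := congrArg (fun z : D => z.val.2 0) hζkill
          have : (l ^ t₁) • f₂ 0 = 0 := hval
          rw [hf₂0, nsmul_eq_mul, mul_one] at this
          exact hle t₁ t₂ this
        -- (ii) t₁ ≤ t₂
        have ht12 : t₁ ≤ t₂ := by
          have g₀D : ((f₁, 0) : (ZMod p → ZMod (l ^ t₁)) × (ZMod p → ZMod (l ^ t₂))) ∈ D := by
            rw [hD]; exact ⟨hf₁sum, by simp⟩
          set g₀ : D := ⟨(f₁, 0), g₀D⟩ with hg₀
          have h1 := hrel g₀ g₀ (hσfix g₀ rfl)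
          rw [hact1] at h1
          have h4 : (ζ g₀).val.1 = 0 :=
            hfix1of b₁ hb₁ (ζ g₀) (congrFun (congrArg Prod.fst h1))
          have hζkill : (l ^ t₂) • ζ g₀ = 0 := by
            apply Subtype.ext
            show (l ^ t₂) • (ζ g₀).val = (0 : (ZMod p → ZMod (l ^ t₁)) × (ZMod p → ZMod (l ^ t₂)))
            refine Prod.ext ?_ ?_
            · show (l ^ t₂) • (ζ g₀).val.1 = 0
              rw [h4, smul_zero]
            · exact hkill₂ (ζ g₀).val.2
          have hgkill : (l ^ t₂) • g₀ = 0 := by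
            apply ζ.injective
            have e : ζ ((l ^ t₂) • g₀) = (l ^ t₂) • ζ g₀ := map_nsmul ζ _ g₀
            rw [e, hζkill, map_zero]
          have hval := congrArg (fun z : D => z.val.1 0) hgkill
          have : (l ^ t₂) • f₁ 0 = 0 := hval
          rw [hf₁0, nsmul_eq_mul, mul_one] at this
          exact hle t₂ t₁ this
        omega
    intro g hg2
    have h1 := hrel g g (hσfix g hg2)
    rw [hact1] at h1
    exact hfix2of b₂ hb₂ (ζ g) (congrFun (congrArg Prod.snd h1))
  -- CLAIM 2 : ζ preserves {g | g.1 = 0}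
  have claim2 : ∀ g : D, g.val.1 = 0 → (ζ g).val.1 = 0 := by
    obtain ⟨b₁, b₂, hrel⟩ := main 1 0
    have hσfix : ∀ g : D, g.val.1 = 0 → affAct l p t₁ t₂ 1 0 1 1 g.val = g.val := by
      intro g hg1
      rw [hact1]
      refine Prod.ext ?_ (by funext x; simp)
      rw [hg1]
      funext x; rfl
    have hb₁ : b₁ ≠ 0 := by
      intro hb₁0
      subst hb₁0
      have h₀D : ((f₁, 0) : (ZMod p → ZMod (l ^ t₁)) × (ZMod p → ZMod (l ^ t₂))) ∈ D := by
        rw [hD]; exact ⟨hf₁sum, by simp⟩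
      set h₀ : D := ⟨(f₁, 0), h₀D⟩ with hh₀
      by_cases hb₂ : b₂ = 0
      · subst hb₂
        have hall : ∀ g : D, g.val.1 = 0 := by
          intro g
          set gσ : D := ⟨affAct l p t₁ t₂ 1 0 1 1 g.val, hmem _ _ _ _ _ g.2⟩ with hgσ
          have h1 := hrel g gσ rfl
          have h2 : affAct l p t₁ t₂ 0 0 1 1 (ζ g).val = (ζ g).val := by
            rw [hact1]
            exact Prod.ext (by funext x; simp)
              (by funext x; simp)
          rw [h2] at h1
          have h3 : gσ = g := ζ.injective (Subtype.ext h1).symm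
          have h4 : affAct l p t₁ t₂ 1 0 1 1 g.val = g.val := congrArg Subtype.val h3
          rw [hact1] at h4
          exact hfix1of 1 hone_ne g (congrFun (congrArg Prod.fst h4))
        exact hf₁ne (hall h₀)
      · -- b₂ ≠ 0, b₁ = 0
        have ht12 : t₁ ≤ t₂ := by
          set g : D := ζ.symm h₀ with hg
          set gσ : D := ⟨affAct l p t₁ t₂ 1 0 1 1 g.val, hmem _ _ _ _ _ g.2⟩ with hgσ
          have h1 := hrel g gσ rfl
          rw [show ζ g = h₀ by rw [hg, ζ.apply_symm_apply]] at h1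
          have h2 : affAct l p t₁ t₂ 0 b₂ 1 1 h₀.val = h₀.val := by
            rw [hact1]
            exact Prod.ext (by funext x; simp) (by funext x; rfl)
          rw [h2] at h1
          have h3 : gσ = g := by
            apply ζ.injective
            rw [show ζ g = h₀ by rw [hg, ζ.apply_symm_apply]]
            exact Subtype.ext h1.symm
          have h4 : affAct l p t₁ t₂ 1 0 1 1 g.val = g.val := congrArg Subtype.val h3
          rw [hact1] at h4
          have hg1 : g.val.1 = 0 := hfix1of 1 hone_ne g (congrFun (congrArg Prod.fst h4))
          have hgkill : (l ^ t₂) • g = 0 := by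
            apply Subtype.ext
            show (l ^ t₂) • g.val = (0 : (ZMod p → ZMod (l ^ t₁)) × (ZMod p → ZMod (l ^ t₂)))
            refine Prod.ext ?_ ?_
            · show (l ^ t₂) • g.val.1 = 0
              rw [hg1, smul_zero]
            · exact hkill₂ g.val.2
          have hζkill : (l ^ t₂) • h₀ = 0 := by
            have e : ζ ((l ^ t₂) • g) = (l ^ t₂) • ζ g := map_nsmul ζ _ g
            rw [hgkill, map_zero] at e
            rw [show h₀ = ζ g by rw [hg, ζ.apply_symm_apply], ← e]
          have hval := congrArg (fun z : D => z.val.1 0) hζkill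
          have : (l ^ t₂) • f₁ 0 = 0 := hval
          rw [hf₁0, nsmul_eq_mul, mul_one] at this
          exact hle t₂ t₁ this
        have ht21 : t₂ ≤ t₁ := by
          have g₀D : ((0, f₂) : (ZMod p → ZMod (l ^ t₁)) × (ZMod p → ZMod (l ^ t₂))) ∈ D := by
            rw [hD]; exact ⟨by simp, hf₂sum⟩
          set g₀ : D := ⟨(0, f₂), g₀D⟩ with hg₀
          have h1 := hrel g₀ g₀ (hσfix g₀ rfl)
          rw [hact1] at h1
          have h4 : (ζ g₀).val.2 = 0 :=
            hfix2of b₂ hb₂ (ζ g₀) (congrFun (congrArg Prod.snd h1))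
          have hζkill : (l ^ t₁) • ζ g₀ = 0 := by
            apply Subtype.ext
            show (l ^ t₁) • (ζ g₀).val = (0 : (ZMod p → ZMod (l ^ t₁)) × (ZMod p → ZMod (l ^ t₂)))
            refine Prod.ext ?_ ?_
            · exact hkill₁ (ζ g₀).val.1
            · show (l ^ t₁) • (ζ g₀).val.2 = 0
              rw [h4, smul_zero]
          have hgkill : (l ^ t₁) • g₀ = 0 := by
            apply ζ.injective
            have e : ζ ((l ^ t₁) • g₀) = (l ^ t₁) • ζ g₀ := map_nsmul ζ _ g₀
            rw [e, hζkill, map_zero]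
          have hval := congrArg (fun z : D => z.val.2 0) hgkill
          have : (l ^ t₁) • f₂ 0 = 0 := hval
          rw [hf₂0, nsmul_eq_mul, mul_one] at this
          exact hle t₁ t₂ this
        omega
    intro g hg1
    have h1 := hrel g g (hσfix g hg1)
    rw [hact1] at h1
    exact hfix1of b₁ hb₁ (ζ g) (congrFun (congrArg Prod.fst h1))
  refine ⟨⟨claim1, claim2⟩, ?_⟩
  -- PART 2
  intro c₁ c₂
  refine ⟨fun h1 h2 => ?_, fun h1 h2 => ?_, fun h1 h2 => ?_⟩
  · ext g
    simp only [Set.mem_setOf_eq, Set.mem_singleton_iff]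
    constructor
    · intro hfx
      rw [hact1] at hfx
      have e1 : g.val.1 = 0 := hfix1of c₁ h1 g (congrFun (congrArg Prod.fst hfx))
      have e2 : g.val.2 = 0 := hfix2of c₂ h2 g (congrFun (congrArg Prod.snd hfx))
      exact Subtype.ext (Prod.ext e1 e2)
    · rintro rfl
      rw [hact1]
      exact Prod.ext (by funext x; rfl) (by funext x; rfl)
  · subst h2
    ext g
    simp only [Set.mem_setOf_eq]
    constructor
    · intro hfx
      rw [hact1] at hfx
      exact hfix1of c₁ h1 g (congrFun (congrArg Prod.fst hfx))
    · intro hg1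
      rw [hact1]
      refine Prod.ext ?_ (by funext x; simp)
      rw [hg1]
      funext x; rfl
  · subst h1
    ext g
    simp only [Set.mem_setOf_eq]
    constructor
    · intro hfx
      rw [hact1] at hfx
      exact hfix2of c₂ h2 g (congrFun (congrArg Prod.snd hfx))
    · intro hg2
      rw [hact1]
      refine Prod.ext (by funext x; simp) ?_
      rw [hg2]
      funext x; rfl
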